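/- Let 0 = t_0 < t_1 < ⋯ < t_N be a partition of [0,T] with step sizes τ_k = t_k − t_{k−1}, let 0 < α < 1, and let a^{(n)}_{n−k} be the nonuniform L1 weights and P^{(n)}_{n−k} the complementary discrete convolution kernels. Then for q ∈ {0,1} and every 1 ≤ n ≤ N, Σ_{k=1}^{n} P^{(n)}_{n−k} β_{1+qα−α}(t_k) ≤ β_{1+qα}(t_n), where β_ν(t) = t^{ν−1}/Γ(ν). -/

import Mathlib

noncomputable def betaK (ν t : ℝ) : ℝ := t ^ (ν - 1) / Real.Gamma ν

open MeasureTheory Set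

namespace Stmt4



variable {α : ℝ}

lemma gamma1a_pos (hα1 : α < 1) : 0 < Real.Gamma (1 - α) :=
  Real.Gamma_pos_of_pos (by linarith)

lemma gammaa_pos (hα0 : 0 < α) : 0 < Real.Gamma α := Real.Gamma_pos_of_pos hα0

lemma gamma2a (hα1 : α < 1) : Real.Gamma (2 - α) = (1 - α) * Real.Gamma (1 - α) := by
  rw [show (2 - α : ℝ) = (1 - α) + 1 by ring, Real.Gamma_add_one (by linarith)]

lemma gamma1pa (hα0 : 0 < α) : Real.Gamma (1 + α) = α * Real.Gamma α := by
  rw [show (1 + α : ℝ) = α + 1 by ring, Real.Gamma_add_one hα0.ne']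

lemma betaK_pos (hα1 : α < 1) {x : ℝ} (hx : 0 < x) : 0 < betaK (1 - α) x :=
  div_pos (Real.rpow_pos_of_pos hx _) (gamma1a_pos hα1)

lemma betaK_anti (hα0 : 0 < α) (hα1 : α < 1) {x y : ℝ} (hx : 0 < x) (hxy : x ≤ y) :
    betaK (1 - α) y ≤ betaK (1 - α) x := by
  unfold betaK
  exact div_le_div_of_nonneg_right
    (Real.rpow_le_rpow_of_nonpos hx hxy (by linarith)) (gamma1a_pos hα1).le

lemma slope_eq (hα0 : 0 < α) (hα1 : α < 1) {A B : ℝ} (hA : 0 ≤ A) (hAB : A < B) :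
    ∃ ξ ∈ Set.Ioo A B, betaK (2 - α) B - betaK (2 - α) A = (B - A) * betaK (1 - α) ξ := by
  have hcont : ContinuousOn (fun x => betaK (2 - α) x) (Set.Icc A B) := by
    intro x _
    exact ((Real.continuousAt_rpow_const x _ (Or.inr (by linarith))).div_const
      _).continuousWithinAt
  have hderiv : ∀ x ∈ Set.Ioo A B, HasDerivAt (fun x => betaK (2 - α) x) (betaK (1 - α) x) x := by
    intro x hx
    have hx0 : 0 < x := lt_of_le_of_lt hA hx.1
    have h := (Real.hasDerivAt_rpow_const (x := x) (p := 2 - α - 1)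
      (Or.inl hx0.ne')).div_const (Real.Gamma (2 - α))
    refine h.congr_deriv ?_
    symm
    unfold betaK
    rw [gamma2a hα1, show (2 - α - 1 - 1 : ℝ) = 1 - α - 1 by ring]
    have h1 : (1 : ℝ) - α ≠ 0 := by linarith
    have h2 : Real.Gamma (1 - α) ≠ 0 := (gamma1a_pos hα1).ne'
    field_simp
    ring
  obtain ⟨c, hc, hceq⟩ := exists_hasDerivAt_eq_slope _ _ hAB hcont hderiv
  refine ⟨c, hc, ?_⟩
  rw [hceq]
  field_simp [sub_ne_zero.2 hAB.ne']




variable {α : ℝ} {N : ℕ} {t : ℕ → ℝ} {a : ℕ → ℕ → ℝ}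

lemma t_le (hmono : ∀ i j : ℕ, i < j → j ≤ N → t i < t j) {i j : ℕ}
    (hij : i ≤ j) (hjN : j ≤ N) : t i ≤ t j := by
  rcases eq_or_lt_of_le hij with rfl | h
  · exact le_refl _
  · exact (hmono i j h hjN).le

lemma t_nonneg (ht0 : t 0 = 0) (hmono : ∀ i j : ℕ, i < j → j ≤ N → t i < t j) {k : ℕ}
    (hkN : k ≤ N) : 0 ≤ t k := ht0 ▸ t_le hmono (Nat.zero_le k) hkN

lemma t_pos (ht0 : t 0 = 0) (hmono : ∀ i j : ℕ, i < j → j ≤ N → t i < t j) {k : ℕ}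
    (hk : 1 ≤ k) (hkN : k ≤ N) : 0 < t k := ht0 ▸ hmono 0 k hk hkN

lemma a_rep (hα0 : 0 < α) (hα1 : α < 1)
    (ht0 : t 0 = 0) (hmono : ∀ i j : ℕ, i < j → j ≤ N → t i < t j)
    (ha : ∀ n k : ℕ, 1 ≤ k → k ≤ n → n ≤ N →
      a n (n - k) =
        (betaK (2 - α) (t n - t (k - 1)) - betaK (2 - α) (t n - t k)) / (t k - t (k - 1)))
    {j k : ℕ} (hk : 1 ≤ k) (hkj : k ≤ j) (hjN : j ≤ N) :
    ∃ ξ ∈ Set.Ioo (t j - t k) (t j - t (k - 1)), a j (j - k) = betaK (1 - α) ξ := by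
  have hA : 0 ≤ t j - t k := sub_nonneg.2 (t_le hmono hkj hjN)
  have hk1 : t (k - 1) < t k := hmono (k - 1) k (by omega) (le_trans hkj hjN)
  have hAB : t j - t k < t j - t (k - 1) := by linarith
  obtain ⟨ξ, hmem, heq⟩ := slope_eq hα0 hα1 hA hAB
  refine ⟨ξ, hmem, ?_⟩
  rw [ha j k hk hkj hjN, heq, show t j - t (k - 1) - (t j - t k) = t k - t (k - 1) by ring]
  exact mul_div_cancel_left₀ _ (by linarith)

lemma a_pos (hα0 : 0 < α) (hα1 : α < 1)
    (ht0 : t 0 = 0) (hmono : ∀ i j : ℕ, i < j → j ≤ N → t i < t j)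
    (ha : ∀ n k : ℕ, 1 ≤ k → k ≤ n → n ≤ N →
      a n (n - k) =
        (betaK (2 - α) (t n - t (k - 1)) - betaK (2 - α) (t n - t k)) / (t k - t (k - 1)))
    {j k : ℕ} (hk : 1 ≤ k) (hkj : k ≤ j) (hjN : j ≤ N) : 0 < a j (j - k) := by
  obtain ⟨ξ, hmem, heq⟩ := a_rep hα0 hα1 ht0 hmono ha hk hkj hjN
  have hA : 0 ≤ t j - t k := sub_nonneg.2 (t_le hmono hkj hjN)
  rw [heq]
  exact betaK_pos hα1 (lt_of_le_of_lt hA hmem.1)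

lemma a_mono (hα0 : 0 < α) (hα1 : α < 1)
    (ht0 : t 0 = 0) (hmono : ∀ i j : ℕ, i < j → j ≤ N → t i < t j)
    (ha : ∀ n k : ℕ, 1 ≤ k → k ≤ n → n ≤ N →
      a n (n - k) =
        (betaK (2 - α) (t n - t (k - 1)) - betaK (2 - α) (t n - t k)) / (t k - t (k - 1)))
    {j k : ℕ} (hk : 1 ≤ k) (hkj : k + 1 ≤ j) (hjN : j ≤ N) :
    a j (j - k) ≤ a j (j - (k + 1)) := by
  obtain ⟨ξ, hmem, heq⟩ := a_rep hα0 hα1 ht0 hmono ha hk (by omega) hjN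
  obtain ⟨ξ', hmem', heq'⟩ := a_rep hα0 hα1 ht0 hmono ha (by omega : 1 ≤ k + 1) hkj hjN
  rw [heq, heq']
  have h1 : 0 ≤ t j - t (k + 1) := sub_nonneg.2 (t_le hmono hkj hjN)
  have h2 : ξ' < t j - t ((k + 1) - 1) := hmem'.2
  have h3 : t j - t ((k + 1) - 1) = t j - t k := by norm_num
  apply betaK_anti hα0 hα1 (lt_of_le_of_lt h1 hmem'.1)
  have := hmem.1
  linarith [h3 ▸ h2]

lemma a_ge (hα0 : 0 < α) (hα1 : α < 1)
    (ht0 : t 0 = 0) (hmono : ∀ i j : ℕ, i < j → j ≤ N → t i < t j)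
    (ha : ∀ n k : ℕ, 1 ≤ k → k ≤ n → n ≤ N →
      a n (n - k) =
        (betaK (2 - α) (t n - t (k - 1)) - betaK (2 - α) (t n - t k)) / (t k - t (k - 1)))
    {j : ℕ} (hj : 1 ≤ j) (hjN : j ≤ N) :
    betaK (1 - α) (t j) ≤ a j (j - 1) := by
  obtain ⟨ξ, hmem, heq⟩ := a_rep hα0 hα1 ht0 hmono ha (le_refl 1) hj hjN
  rw [heq]
  have h1 : 0 ≤ t j - t 1 := sub_nonneg.2 (t_le hmono hj hjN)
  have h2 : ξ < t j := by
    have := hmem.2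
    simp only [Nat.sub_self] at this
    rw [ht0] at this
    linarith
  exact betaK_anti hα0 hα1 (lt_of_le_of_lt h1 hmem.1) h2.le

lemma int_g (hα1 : α < 1) (tj c d : ℝ) :
    IntervalIntegrable (fun s => (tj - s) ^ (-α)) volume c d := by
  have h := (intervalIntegral.intervalIntegrable_rpow' (a := tj - c) (b := tj - d)
    (r := -α) (by linarith)).comp_sub_left tj
  simpa [sub_sub_cancel] using h

lemma int_h (hα0 : 0 < α) (c d : ℝ) :
    IntervalIntegrable (fun s : ℝ => s ^ (α - 1)) volume c d :=
  intervalIntegral.intervalIntegrable_rpow' (by linarith)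

lemma int_gh (hα0 : 0 < α) (hα1 : α < 1) {tj : ℝ} (htj : 0 < tj) {c d : ℝ}
    (hsub : Set.uIcc c d ⊆ Set.uIcc 0 tj) :
    IntervalIntegrable (fun s => (tj - s) ^ (-α) * s ^ (α - 1)) volume c d := by
  have h1 : IntervalIntegrable (fun s => (tj - s) ^ (-α) * s ^ (α - 1)) volume 0 (tj / 2) := by
    apply IntervalIntegrable.continuousOn_mul (int_h hα0 0 (tj / 2))
    apply ContinuousOn.rpow_const ((continuous_const.sub continuous_id).continuousOn)
    intro x hx
    rw [Set.uIcc_of_le (by linarith : (0:ℝ) ≤ tj / 2)] at hx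
    exact Or.inl (sub_ne_zero.2 (by linarith [hx.2] : x < tj).ne')
  have h2 : IntervalIntegrable (fun s => (tj - s) ^ (-α) * s ^ (α - 1)) volume (tj / 2) tj := by
    apply IntervalIntegrable.mul_continuousOn (int_g hα1 tj (tj / 2) tj)
    apply ContinuousOn.rpow_const continuous_id.continuousOn
    intro x hx
    rw [Set.uIcc_of_le (by linarith : tj / 2 ≤ tj)] at hx
    exact Or.inl (by linarith [hx.1] : (0:ℝ) < x).ne'
  exact (h1.trans h2).mono_set hsub

lemma int_g_val (hα0 : 0 < α) (hα1 : α < 1) {tj c d : ℝ} (hcd : c ≤ d) (hd : d ≤ tj) :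
    ∫ s in c..d, (tj - s) ^ (-α) =
      Real.Gamma (1 - α) * (betaK (2 - α) (tj - c) - betaK (2 - α) (tj - d)) := by
  rw [intervalIntegral.integral_comp_sub_left (fun x => x ^ (-α)) tj,
    integral_rpow (Or.inl (by linarith))]
  unfold betaK
  rw [gamma2a hα1, show (2 - α - 1 : ℝ) = -α + 1 by ring]
  have h1 : (1:ℝ) - α ≠ 0 := by linarith
  have h2 : Real.Gamma (1 - α) ≠ 0 := (gamma1a_pos hα1).ne'
  have h3 : (-α + 1 : ℝ) ≠ 0 := by linarith
  field_simp
  ring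

lemma int_h_val (hα0 : 0 < α) {c d : ℝ} :
    ∫ s in c..d, s ^ (α - 1) = Real.Gamma α * (betaK (1 + α) d - betaK (1 + α) c) := by
  rw [integral_rpow (Or.inl (by linarith))]
  unfold betaK
  rw [gamma1pa hα0, show (1 + α - 1 : ℝ) = α - 1 + 1 by ring]
  have h1 : Real.Gamma α ≠ 0 := (gammaa_pos hα0).ne'
  have h2 : (α - 1 + 1 : ℝ) ≠ 0 := by simpa using hα0.ne'
  field_simp
  ring

lemma beta01 (hα0 : 0 < α) (hα1 : α < 1) :
    ∫ u in (0:ℝ)..1, u ^ (α - 1) * (1 - u) ^ (-α) = Real.Gamma α * Real.Gamma (1 - α) := by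
  have h1 : (0:ℝ) < 1 - α := by linarith
  have h := Complex.Gamma_mul_Gamma_eq_betaIntegral (s := (α : ℂ)) (t := ((1 - α : ℝ) : ℂ))
    (by simpa using hα0) (by simpa using h1)
  rw [show ((α : ℂ) + ((1 - α : ℝ) : ℂ)) = 1 by push_cast; ring, Complex.Gamma_one, one_mul,
    Complex.Gamma_ofReal, Complex.Gamma_ofReal, Complex.betaIntegral] at h
  have congrf : Set.EqOn (fun x : ℝ => (x : ℂ) ^ ((α : ℂ) - 1) * (1 - (x : ℂ)) ^ (((1 - α : ℝ) : ℂ) - 1))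
      (fun x : ℝ => ((x ^ (α - 1) * (1 - x) ^ (-α) : ℝ) : ℂ)) (Set.uIcc 0 1) := by
    intro x hx
    rw [Set.uIcc_of_le (by norm_num : (0:ℝ) ≤ 1)] at hx
    have hx0 : (0:ℝ) ≤ x := hx.1
    have hx1 : (0:ℝ) ≤ 1 - x := by linarith [hx.2]
    simp only
    rw [show ((α : ℂ) - 1) = ((α - 1 : ℝ) : ℂ) by push_cast; ring,
      show ((((1 - α : ℝ)) : ℂ) - 1) = ((-α : ℝ) : ℂ) by push_cast; ring,
      ← Complex.ofReal_cpow hx0,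
      show (1 - (x : ℂ)) = ((1 - x : ℝ) : ℂ) by push_cast; ring,
      ← Complex.ofReal_cpow hx1]
    push_cast
    ring
  rw [intervalIntegral.integral_congr congrf, intervalIntegral.integral_ofReal] at h
  exact_mod_cast h.symm

lemma beta_val (hα0 : 0 < α) (hα1 : α < 1) {tj : ℝ} (htj : 0 < tj) :
    ∫ s in (0:ℝ)..tj, (tj - s) ^ (-α) * s ^ (α - 1) = Real.Gamma α * Real.Gamma (1 - α) := by
  have hsub := intervalIntegral.integral_comp_mul_left (a := (0:ℝ)) (b := 1)
    (fun s => (tj - s) ^ (-α) * s ^ (α - 1)) htj.ne'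
  rw [mul_zero, mul_one] at hsub
  have congrf : Set.EqOn (fun u : ℝ => (tj - tj * u) ^ (-α) * (tj * u) ^ (α - 1))
      (fun u : ℝ => tj⁻¹ * (u ^ (α - 1) * (1 - u) ^ (-α))) (Set.uIcc 0 1) := by
    intro u hu
    rw [Set.uIcc_of_le (by norm_num : (0:ℝ) ≤ 1)] at hu
    simp only
    rw [show tj - tj * u = tj * (1 - u) by ring,
      Real.mul_rpow htj.le (by linarith [hu.2]), Real.mul_rpow htj.le hu.1]
    have key : tj ^ (-α) * tj ^ (α - 1) = tj⁻¹ := by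
      rw [← Real.rpow_add htj, show (-α + (α - 1) : ℝ) = -1 by ring, Real.rpow_neg_one]
    linear_combination ((1 - u) ^ (-α) * u ^ (α - 1)) * key
  rw [intervalIntegral.integral_congr congrf, intervalIntegral.integral_const_mul,
    beta01 hα0 hα1, smul_eq_mul] at hsub
  exact (mul_left_cancel₀ (inv_ne_zero htj.ne') hsub).symm
lemma cheb (hα0 : 0 < α) (hα1 : α < 1) {tj c d : ℝ} (htj : 0 < tj)
    (hc : 0 ≤ c) (hcd : c < d) (hd : d ≤ tj) :
    (d - c) * ∫ s in c..d, (tj - s) ^ (-α) * s ^ (α - 1) ≤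
      (∫ s in c..d, (tj - s) ^ (-α)) * ∫ s in c..d, s ^ (α - 1) := by
  set g : ℝ → ℝ := fun s => (tj - s) ^ (-α) with hg
  set h : ℝ → ℝ := fun s => s ^ (α - 1) with hh
  have hsubIcc : Set.uIcc c d ⊆ Set.uIcc 0 tj := by
    rw [Set.uIcc_of_le hcd.le, Set.uIcc_of_le htj.le]
    exact Set.Icc_subset_Icc hc hd
  have hIgh : IntervalIntegrable (fun s => g s * h s) volume c d := int_gh hα0 hα1 htj hsubIcc
  have hIghx : ∀ x ∈ Set.Icc c d, IntervalIntegrable (fun s => g s * h s) volume c x := by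
    intro x hx
    apply hIgh.mono_set
    rw [Set.uIcc_of_le hcd.le, Set.uIcc_of_le hx.1]
    exact Set.Icc_subset_Icc (le_refl c) hx.2
  have hgcont : ContinuousOn g (Set.Ioo 0 tj) := by
    apply ContinuousOn.rpow_const ((continuous_const.sub continuous_id).continuousOn)
    exact fun x hx => Or.inl (sub_ne_zero.2 hx.2.ne')
  have hhcont : ContinuousOn h (Set.Ioo 0 tj) := by
    apply ContinuousOn.rpow_const continuous_id.continuousOn
    exact fun x hx => Or.inl hx.1.ne'
  have hmem : ∀ x ∈ Set.Ioo c d, x ∈ Set.Ioo 0 tj :=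
    fun x hx => ⟨lt_of_le_of_lt hc hx.1, lt_of_lt_of_le hx.2 hd⟩
  have hDg : ∀ x ∈ Set.Ioo c d, HasDerivAt (fun y => ∫ s in c..y, g s) (g x) x := by
    intro x hx
    exact intervalIntegral.integral_hasDerivAt_right (int_g hα1 tj c x)
      (ContinuousOn.stronglyMeasurableAtFilter isOpen_Ioo hgcont x (hmem x hx))
      (hgcont.continuousAt (isOpen_Ioo.mem_nhds (hmem x hx)))
  have hDh : ∀ x ∈ Set.Ioo c d, HasDerivAt (fun y => ∫ s in c..y, h s) (h x) x := by
    intro x hx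
    exact intervalIntegral.integral_hasDerivAt_right (int_h hα0 c x)
      (ContinuousOn.stronglyMeasurableAtFilter isOpen_Ioo hhcont x (hmem x hx))
      (hhcont.continuousAt (isOpen_Ioo.mem_nhds (hmem x hx)))
  have hDgh : ∀ x ∈ Set.Ioo c d,
      HasDerivAt (fun y => ∫ s in c..y, g s * h s) (g x * h x) x := by
    intro x hx
    exact intervalIntegral.integral_hasDerivAt_right (hIghx x ⟨hx.1.le, hx.2.le⟩)
      (ContinuousOn.stronglyMeasurableAtFilter isOpen_Ioo (hgcont.mul hhcont) x (hmem x hx))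
      ((hgcont.mul hhcont).continuousAt (isOpen_Ioo.mem_nhds (hmem x hx)))
  set φ : ℝ → ℝ := fun x =>
    (∫ s in c..x, g s) * (∫ s in c..x, h s) - (x - c) * ∫ s in c..x, g s * h s with hφ
  have hDφ : ∀ x ∈ Set.Ioo c d, HasDerivAt φ
      (g x * (∫ s in c..x, h s) + (∫ s in c..x, g s) * h x -
        (1 * (∫ s in c..x, g s * h s) + (x - c) * (g x * h x))) x := by
    intro x hx
    exact ((hDg x hx).mul (hDh x hx)).sub
      (((hasDerivAt_id x).sub_const c).mul (hDgh x hx))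
  have hderiv_nonneg : ∀ x ∈ Set.Ioo c d, 0 ≤
      g x * (∫ s in c..x, h s) + (∫ s in c..x, g s) * h x -
        (1 * (∫ s in c..x, g s * h s) + (x - c) * (g x * h x)) := by
    intro x hx
    have hxtj : x < tj := lt_of_lt_of_le hx.2 hd
    have hint : 0 ≤ ∫ s in c..x, (g x - g s) * (h s - h x) := by
      have hae : ∀ᵐ s ∂(volume.restrict (Set.Icc c x)), 0 ≤ (g x - g s) * (h s - h x) := by
        rw [MeasureTheory.ae_restrict_iff' measurableSet_Icc]
        have hne : ∀ᵐ (s : ℝ) ∂volume, s ≠ c := by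
          rw [MeasureTheory.ae_iff]
          have : {s : ℝ | ¬s ≠ c} = {c} := by ext s; simp
          rw [this]
          exact Real.volume_singleton
        filter_upwards [hne] with s hs hmem'
        have hs0 : 0 < s := lt_of_le_of_lt hc (lt_of_le_of_ne hmem'.1 (Ne.symm hs))
        have hsx : s ≤ x := hmem'.2
        apply mul_nonneg
        · have h1 : 0 < tj - x := by linarith
          have := Real.rpow_le_rpow_of_nonpos h1 (by linarith : tj - x ≤ tj - s)
            (by linarith : -α ≤ 0)
          simp only [hg]
          linarith
        · have := Real.rpow_le_rpow_of_nonpos hs0 hsx (by linarith : α - 1 ≤ 0)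
          simp only [hh]
          linarith
      exact intervalIntegral.integral_nonneg_of_ae_restrict hx.1.le hae
    have iA : IntervalIntegrable (fun s => g x * h s) volume c x :=
      (int_h hα0 c x).const_mul (g x)
    have iB : IntervalIntegrable (fun s => h x * g s) volume c x :=
      (int_g hα1 tj c x).const_mul (h x)
    have iC : IntervalIntegrable (fun s => g s * h s) volume c x := hIghx x ⟨hx.1.le, hx.2.le⟩
    have iD : IntervalIntegrable (fun _ : ℝ => g x * h x) volume c x :=
      intervalIntegrable_const
    have hexp : ∫ s in c..x, (g x - g s) * (h s - h x) =
        g x * (∫ s in c..x, h s) + (∫ s in c..x, g s) * h x -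
          (1 * (∫ s in c..x, g s * h s) + (x - c) * (g x * h x)) := by
      have e1 : Set.EqOn (fun s => (g x - g s) * (h s - h x))
          (fun s => g x * h s + h x * g s - g s * h s - g x * h x) (Set.uIcc c x) :=
        fun s _ => by ring
      rw [intervalIntegral.integral_congr e1,
        intervalIntegral.integral_sub (((iA.add iB).sub iC)) iD,
        intervalIntegral.integral_sub (iA.add iB) iC,
        intervalIntegral.integral_add iA iB,
        intervalIntegral.integral_const_mul, intervalIntegral.integral_const_mul,
        intervalIntegral.integral_const, smul_eq_mul]
      ring
    rw [hexp] at hint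
    exact hint
  have hmonoφ : MonotoneOn φ (Set.Icc c d) := by
    apply monotoneOn_of_deriv_nonneg (convex_Icc c d)
    · have c1 : ContinuousOn (fun x => ∫ s in c..x, g s) (Set.Icc c d) := by
        rw [← Set.uIcc_of_le hcd.le]
        exact intervalIntegral.continuousOn_primitive_interval' (int_g hα1 tj c d)
          Set.left_mem_uIcc
      have c2 : ContinuousOn (fun x => ∫ s in c..x, h s) (Set.Icc c d) := by
        rw [← Set.uIcc_of_le hcd.le]
        exact intervalIntegral.continuousOn_primitive_interval' (int_h hα0 c d)
          Set.left_mem_uIcc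
      have c3 : ContinuousOn (fun x => ∫ s in c..x, g s * h s) (Set.Icc c d) := by
        rw [← Set.uIcc_of_le hcd.le]
        exact intervalIntegral.continuousOn_primitive_interval' hIgh Set.left_mem_uIcc
      exact (c1.mul c2).sub ((continuousOn_id.sub continuousOn_const).mul c3)
    · rw [interior_Icc]
      intro x hx
      exact (hDφ x hx).differentiableAt.differentiableWithinAt
    · rw [interior_Icc]
      intro x hx
      rw [(hDφ x hx).deriv]
      exact hderiv_nonneg x hx
  have h0 : φ c = 0 := by simp [hφ]
  have hfin := hmonoφ (Set.left_mem_Icc.2 hcd.le) (Set.right_mem_Icc.2 hcd.le) hcd.le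
  rw [h0] at hfin
  simp only [hφ] at hfin
  linarith
lemma sum_Icc_one (n : ℕ) (f : ℕ → ℝ) :
    ∑ k ∈ Finset.Icc 1 n, f k = ∑ i ∈ Finset.range n, f (i + 1) := by
  induction n with
  | zero => simp
  | succ m ih => rw [Finset.sum_Icc_succ_top (by omega), ih, Finset.sum_range_succ]

lemma telescope (n : ℕ) (f : ℕ → ℝ) :
    ∑ k ∈ Finset.Icc 1 n, (f k - f (k - 1)) = f n - f 0 := by
  rw [sum_Icc_one n (fun k => f k - f (k - 1))]
  have h : ∀ i ∈ Finset.range n, f (i + 1) - f (i + 1 - 1) = f (i + 1) - f i := by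
    intro i _; simp
  rw [Finset.sum_congr rfl h]
  exact Finset.sum_range_sub f n

lemma sum_swap (n : ℕ) (F : ℕ → ℕ → ℝ) :
    ∑ j ∈ Finset.Icc 1 n, ∑ k ∈ Finset.Icc 1 j, F j k
      = ∑ k ∈ Finset.Icc 1 n, ∑ j ∈ Finset.Icc k n, F j k := by
  have h1 : ∀ j ∈ Finset.Icc 1 n,
      ∑ k ∈ Finset.Icc 1 j, F j k = ∑ k ∈ Finset.Icc 1 n, if k ≤ j then F j k else 0 := by
    intro j hj
    rw [Finset.mem_Icc] at hj
    rw [← Finset.sum_filter]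
    apply Finset.sum_congr _ (fun _ _ => rfl)
    ext x
    simp only [Finset.mem_Icc, Finset.mem_filter]
    omega
  rw [Finset.sum_congr rfl h1, Finset.sum_comm]
  apply Finset.sum_congr rfl
  intro k hk
  rw [Finset.mem_Icc] at hk
  rw [← Finset.sum_filter]
  apply Finset.sum_congr _ (fun _ _ => rfl)
  ext x
  simp only [Finset.mem_Icc, Finset.mem_filter]
  omega

lemma keyJ (hα0 : 0 < α) (hα1 : α < 1) {N : ℕ} {t : ℕ → ℝ} {a : ℕ → ℕ → ℝ}
    (ht0 : t 0 = 0) (hmono : ∀ i j : ℕ, i < j → j ≤ N → t i < t j)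
    (ha : ∀ n k : ℕ, 1 ≤ k → k ≤ n → n ≤ N →
      a n (n - k) =
        (betaK (2 - α) (t n - t (k - 1)) - betaK (2 - α) (t n - t k)) / (t k - t (k - 1)))
    {j : ℕ} (hj : 1 ≤ j) (hjN : j ≤ N) :
    1 ≤ ∑ k ∈ Finset.Icc 1 j, a j (j - k) * (betaK (1 + α) (t k) - betaK (1 + α) (t (k - 1))) := by
  have htj : 0 < t j := t_pos ht0 hmono hj hjN
  have hΓ1a := gamma1a_pos hα1
  have hΓa := gammaa_pos hα0
  have hterm : ∀ k ∈ Finset.Icc 1 j,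
      (1 / (Real.Gamma α * Real.Gamma (1 - α))) *
        (∫ s in (t (k - 1))..(t k), (t j - s) ^ (-α) * s ^ (α - 1))
      ≤ a j (j - k) * (betaK (1 + α) (t k) - betaK (1 + α) (t (k - 1))) := by
    intro k hk
    rw [Finset.mem_Icc] at hk
    have hkN : k ≤ N := le_trans hk.2 hjN
    have hc : 0 ≤ t (k - 1) := t_nonneg ht0 hmono (by omega)
    have hcd : t (k - 1) < t k := hmono (k - 1) k (by omega) hkN
    have hd : t k ≤ t j := t_le hmono hk.2 hjN
    have hG := int_g_val (tj := t j) (c := t (k - 1)) (d := t k) hα0 hα1 hcd.le hd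
    have hH := int_h_val (c := t (k - 1)) (d := t k) hα0
    have hcheb := cheb hα0 hα1 htj hc hcd hd
    rw [ha j k hk.1 hk.2 hjN]
    rw [hG, hH] at hcheb
    have hdc : (0:ℝ) < t k - t (k - 1) := by linarith
    rw [div_mul_eq_mul_div, div_mul_eq_mul_div, div_le_div_iff₀ (by positivity) hdc]
    nlinarith [hcheb]
  have hint : ∀ K, K < j → IntervalIntegrable
      (fun s => (t j - s) ^ (-α) * s ^ (α - 1)) volume (t K) (t (K + 1)) := by
    intro K hK
    apply int_gh hα0 hα1 htj
    rw [Set.uIcc_of_le (t_le hmono (by omega) (by omega)), Set.uIcc_of_le htj.le]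
    exact Set.Icc_subset_Icc (t_nonneg ht0 hmono (by omega)) (t_le hmono (by omega) hjN)
  have hadj := intervalIntegral.sum_integral_adjacent_intervals (a := t) (n := j) hint
  rw [ht0] at hadj
  calc (1:ℝ) = (1 / (Real.Gamma α * Real.Gamma (1 - α))) *
        (Real.Gamma α * Real.Gamma (1 - α)) := by field_simp
    _ = (1 / (Real.Gamma α * Real.Gamma (1 - α))) *
        ∫ s in (0:ℝ)..(t j), (t j - s) ^ (-α) * s ^ (α - 1) := by
          rw [beta_val hα0 hα1 htj]
    _ = ∑ k ∈ Finset.Icc 1 j, (1 / (Real.Gamma α * Real.Gamma (1 - α))) *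
        ∫ s in (t (k - 1))..(t k), (t j - s) ^ (-α) * s ^ (α - 1) := by
          rw [← Finset.mul_sum]
          congr 1
          rw [sum_Icc_one j (fun k => ∫ s in (t (k - 1))..(t k), (t j - s) ^ (-α) * s ^ (α - 1))]
          rw [← hadj]
          apply Finset.sum_congr rfl
          intro i _
          simp
    _ ≤ _ := Finset.sum_le_sum hterm
end Stmt4
theorem stmt_4 (T : ℝ) (N : ℕ) (hN : 1 ≤ N) (t : ℕ → ℝ) (α : ℝ)
    (hα0 : 0 < α) (hα1 : α < 1)
    (ht0 : t 0 = 0) (htN : t N = T)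
    (hmono : ∀ i j : ℕ, i < j → j ≤ N → t i < t j)
    (a : ℕ → ℕ → ℝ)
    (ha : ∀ n k : ℕ, 1 ≤ k → k ≤ n → n ≤ N →
      a n (n - k) =
        (betaK (2 - α) (t n - t (k - 1)) - betaK (2 - α) (t n - t k)) / (t k - t (k - 1)))
    (P : ℕ → ℕ → ℝ)
    (hP0 : ∀ n : ℕ, 1 ≤ n → n ≤ N → P n 0 = 1 / a n 0)
    (hPrec : ∀ n k : ℕ, 1 ≤ k → k + 1 ≤ n → n ≤ N →
      P n (n - k) = (1 / a k 0) *
        ∑ j ∈ Finset.Icc (k + 1) n, (a j (j - k - 1) - a j (j - k)) * P n (n - j)) :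
    ∀ q : ℝ, (q = 0 ∨ q = 1) → ∀ n : ℕ, 1 ≤ n → n ≤ N →
      ∑ k ∈ Finset.Icc 1 n, P n (n - k) * betaK (1 + q * α - α) (t k) ≤
        betaK (1 + q * α) (t n) := by
  intro q hq n hn hnN
  have ha0pos : ∀ {k : ℕ}, 1 ≤ k → k ≤ N → 0 < a k 0 := by
    intro k hk hkN
    have h := Stmt4.a_pos hα0 hα1 ht0 hmono ha hk (le_refl k) hkN
    rwa [Nat.sub_self] at h
  have hPnn : ∀ d j k : ℕ, 1 ≤ k → k ≤ j → j ≤ N → j - k = d → 0 ≤ P j (j - k) := by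
    intro d
    induction d using Nat.strong_induction_on with
    | _ d ih =>
      intro j k hk hkj hjN hd
      rcases eq_or_lt_of_le hkj with rfl | hlt
      · rw [Nat.sub_self, hP0 k hk hjN]
        exact le_of_lt (div_pos one_pos (ha0pos hk hjN))
      · rw [hPrec j k hk hlt hjN]
        apply mul_nonneg (le_of_lt (div_pos one_pos
          (ha0pos hk (le_trans (le_of_lt hlt) hjN))))
        apply Finset.sum_nonneg
        intro i hi
        rw [Finset.mem_Icc] at hi
        apply mul_nonneg
        · rw [sub_nonneg]
          have h := Stmt4.a_mono hα0 hα1 ht0 hmono ha hk hi.1 (le_trans hi.2 hjN)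
          simpa [Nat.sub_sub] using h
        · exact ih (j - i) (by omega) j i (by omega) hi.2 hjN rfl
  have hortho : ∀ d k : ℕ, 1 ≤ k → k ≤ n → n - k = d →
      ∑ i ∈ Finset.Icc k n, P n (n - i) * a i (i - k) = 1 := by
    intro d
    induction d using Nat.strong_induction_on with
    | _ d ih =>
      intro k hk hkn hd
      rcases eq_or_lt_of_le hkn with rfl | hlt
      · rw [Finset.Icc_self, Finset.sum_singleton, Nat.sub_self, hP0 k hk hnN]
        exact one_div_mul_cancel (ha0pos hk hnN).ne'
      · have hsplit : Finset.Icc k n = insert k (Finset.Icc (k + 1) n) := by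
          ext x; simp only [Finset.mem_Icc, Finset.mem_insert]; omega
        rw [hsplit, Finset.sum_insert (by simp), Nat.sub_self]
        have hak : a k 0 ≠ 0 := (ha0pos hk (le_trans hkn hnN)).ne'
        rw [hPrec n k hk hlt hnN]
        have hcancel : 1 / a k 0 *
            (∑ i ∈ Finset.Icc (k + 1) n, (a i (i - k - 1) - a i (i - k)) * P n (n - i)) * a k 0
            = ∑ i ∈ Finset.Icc (k + 1) n, (a i (i - k - 1) - a i (i - k)) * P n (n - i) := by
          field_simp
        rw [hcancel, ← Finset.sum_add_distrib]
        have hcongr : ∀ i ∈ Finset.Icc (k + 1) n,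
            (a i (i - k - 1) - a i (i - k)) * P n (n - i) + P n (n - i) * a i (i - k)
              = P n (n - i) * a i (i - (k + 1)) := by
          intro i _
          rw [Nat.sub_sub]
          ring
        rw [Finset.sum_congr rfl hcongr]
        exact ih (n - (k + 1)) (by omega) (k + 1) (by omega) (by omega) rfl
  rcases hq with rfl | rfl
  · -- q = 0
    rw [show (1 + 0 * α - α : ℝ) = 1 - α by ring, show (1 + 0 * α : ℝ) = 1 by ring]
    have hRHS : betaK 1 (t n) = 1 := by
      unfold betaK
      rw [show (1 - 1 : ℝ) = 0 by norm_num, Real.rpow_zero, Real.Gamma_one, div_one]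
    rw [hRHS]
    have step : ∀ k ∈ Finset.Icc 1 n,
        P n (n - k) * betaK (1 - α) (t k) ≤ P n (n - k) * a k (k - 1) := by
      intro k hk
      rw [Finset.mem_Icc] at hk
      apply mul_le_mul_of_nonneg_left
      · exact Stmt4.a_ge hα0 hα1 ht0 hmono ha hk.1 (le_trans hk.2 hnN)
      · exact hPnn (n - k) n k hk.1 hk.2 hnN rfl
    calc ∑ k ∈ Finset.Icc 1 n, P n (n - k) * betaK (1 - α) (t k)
        ≤ ∑ k ∈ Finset.Icc 1 n, P n (n - k) * a k (k - 1) := Finset.sum_le_sum step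
      _ = 1 := hortho (n - 1) 1 (le_refl 1) hn rfl
  · -- q = 1
    rw [show (1 + 1 * α - α : ℝ) = 1 by ring, show (1 + 1 * α : ℝ) = 1 + α by ring]
    have hbk1 : ∀ x : ℝ, betaK 1 x = 1 := by
      intro x
      unfold betaK
      rw [show (1 - 1 : ℝ) = 0 by norm_num, Real.rpow_zero, Real.Gamma_one, div_one]
    simp only [hbk1, mul_one]
    have hv0 : betaK (1 + α) (t 0) = 0 := by
      rw [ht0]
      unfold betaK
      rw [Real.zero_rpow (by intro hcon; linarith [hcon] : (1 + α - 1 : ℝ) ≠ 0), zero_div]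
    calc ∑ k ∈ Finset.Icc 1 n, P n (n - k)
        ≤ ∑ j ∈ Finset.Icc 1 n, P n (n - j) *
            (∑ k ∈ Finset.Icc 1 j, a j (j - k) *
              (betaK (1 + α) (t k) - betaK (1 + α) (t (k - 1)))) := by
          apply Finset.sum_le_sum
          intro j hj
          rw [Finset.mem_Icc] at hj
          exact le_mul_of_one_le_right (hPnn (n - j) n j hj.1 hj.2 hnN rfl)
            (Stmt4.keyJ hα0 hα1 ht0 hmono ha hj.1 (le_trans hj.2 hnN))
      _ = ∑ j ∈ Finset.Icc 1 n, ∑ k ∈ Finset.Icc 1 j, P n (n - j) *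
            (a j (j - k) * (betaK (1 + α) (t k) - betaK (1 + α) (t (k - 1)))) := by
          exact Finset.sum_congr rfl fun j _ => Finset.mul_sum _ _ _
      _ = ∑ k ∈ Finset.Icc 1 n, ∑ j ∈ Finset.Icc k n, P n (n - j) *
            (a j (j - k) * (betaK (1 + α) (t k) - betaK (1 + α) (t (k - 1)))) :=
          Stmt4.sum_swap n _
      _ = ∑ k ∈ Finset.Icc 1 n, (betaK (1 + α) (t k) - betaK (1 + α) (t (k - 1))) := by
          apply Finset.sum_congr rfl
          intro k hk
          rw [Finset.mem_Icc] at hk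
          have hre : ∀ j ∈ Finset.Icc k n, P n (n - j) *
              (a j (j - k) * (betaK (1 + α) (t k) - betaK (1 + α) (t (k - 1))))
                = (P n (n - j) * a j (j - k)) *
                  (betaK (1 + α) (t k) - betaK (1 + α) (t (k - 1))) := fun j _ => by ring
          rw [Finset.sum_congr rfl hre, ← Finset.sum_mul, hortho (n - k) k hk.1 hk.2 rfl,
            one_mul]
      _ = betaK (1 + α) (t n) - betaK (1 + α) (t 0) :=
          Stmt4.telescope n (fun k => betaK (1 + α) (t k))
      _ ≤ betaK (1 + α) (t n) := by rw [hv0]; linarith
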